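/- Let n' ≥ n with n' ≡ n (mod 2). If S^B_{Q,q}(n,d) is not a semisimple K-algebra, then S^B_{Q,q}(n',d) is not a semisimple K-algebra. -/

import Mathlib

set_option maxHeartbeats 1000000
set_option synthInstance.maxHeartbeats 1000000
open scoped TensorProduct
open scoped Classical

noncomputable section

/-- The index set `I(n)`: the integers in `[-⌊n/2⌋, ⌊n/2⌋]`, with `0` excluded when `n` is even. -/
def IFin (n : ℕ) : Finset ℤ :=
  (Finset.Icc (-((n / 2 : ℕ) : ℤ)) ((n / 2 : ℕ) : ℤ)).filter fun i => i ≠ 0 ∨ n % 2 = 1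

lemma neg_mem_IFin {n : ℕ} {i : ℤ} (h : i ∈ IFin n) : -i ∈ IFin n := by
  simp only [IFin, Finset.mem_filter, Finset.mem_Icc] at h ⊢
  rcases h with ⟨⟨h1, h2⟩, h3⟩
  refine ⟨⟨by omega, by omega⟩, ?_⟩
  rcases h3 with h3 | h3
  · exact Or.inl (by omega)
  · exact Or.inr h3

/-- Negation on the index set. -/
def negI (n : ℕ) (i : ↥(IFin n)) : ↥(IFin n) := ⟨-(i : ℤ), neg_mem_IFin i.2⟩

variable (K : Type) [Field K] (Q q : K) (n d : ℕ)

/-- The tensor space `V(n)^{⊗ d}`, realized as the free `K`-module on the set of `d`-tuples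
of elements of `I(n)`; the tuple `μ` corresponds to the basis vector `v_μ`. -/
def TSp : Type := (Fin d → ↥(IFin n)) →₀ K

instance : AddCommGroup (TSp K n d) :=
  inferInstanceAs (AddCommGroup ((Fin d → ↥(IFin n)) →₀ K))

instance : Module K (TSp K n d) :=
  inferInstanceAs (Module K ((Fin d → ↥(IFin n)) →₀ K))

/-- The basis vector `v_μ` of the tensor space. -/
def bs (μ : Fin d → ↥(IFin n)) : TSp K n d := Finsupp.single μ 1

/-- The value of the right action of the Hecke generator `T_t` (for `t = 0` this is `T_0`,
for `t ≥ 1` it is the type A generator acting on the tensor positions `t-1, t` (0-indexed)). -/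
def preT (t : Fin d) (μ : Fin d → ↥(IFin n)) : TSp K n d :=
  if (t : ℕ) = 0 then
    if 0 < ((μ t : ℤ)) then bs K n d (Function.update μ t (negI n (μ t)))
    else if ((μ t : ℤ)) = 0 then Q⁻¹ • bs K n d μ
    else bs K n d (Function.update μ t (negI n (μ t))) + (Q⁻¹ - Q) • bs K n d μ
  else
    let p : Fin d := ⟨(t : ℕ) - 1, Nat.lt_of_le_of_lt (Nat.sub_le _ _) t.isLt⟩
    if ((μ p : ℤ)) < ((μ t : ℤ)) then bs K n d (μ ∘ Equiv.swap p t)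
    else if ((μ p : ℤ)) = ((μ t : ℤ)) then q⁻¹ • bs K n d μ
    else bs K n d (μ ∘ Equiv.swap p t) + (q⁻¹ - q) • bs K n d μ

/-- The operator on the tensor space given by the right action of the Hecke generator `T_t`. -/
def Tact (t : Fin d) : Module.End K (TSp K n d) :=
  Finsupp.lift (TSp K n d) K (Fin d → ↥(IFin n)) (preT K Q q n d t)

/-- The right action operator of `T_t` for a natural number index, the identity out of range. -/
def Tact' (t : ℕ) : Module.End K (TSp K n d) :=
  if h : t < d then Tact K Q q n d ⟨t, h⟩ else 1

/-- The type B `q`-Schur algebra `S^B_{Q,q}(n,d) = End_{H^B_{Q,q}(d)}(V(n)^{⊗d})`, realized as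
the centralizer of the operators giving the right action of the generators `T_0, …, T_{d-1}`. -/
def SchurB : Subalgebra K (Module.End K (TSp K n d)) :=
  Subalgebra.centralizer K (Set.range (Tact K Q q n d))

/-- The type A `q`-Schur algebra `S^A_q(m,i) = End_{H_q(Σ_i)}(V(m)^{⊗i})`, realized as the
centralizer of the operators giving the right action of the generators `T_1, …, T_{i-1}`. -/
def SchurA (m i : ℕ) : Subalgebra K (Module.End K (TSp K m i)) :=
  Subalgebra.centralizer K {f | ∃ t : Fin i, (t : ℕ) ≠ 0 ∧ f = Tact K q q m i t}

/-- The polynomial `f^B_d(Q,q) = ∏_{i=1-d}^{d-1} (Q⁻² + q^{2i})`. -/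
def fB : K := ∏ i ∈ Finset.Icc (1 - (d : ℤ)) ((d : ℤ) - 1), (Q⁻¹ ^ 2 + q ^ (2 * i))


-- abstract corner lemma

/-- The "corner ideal" `τ S = {r | ψ r ∈ e S e}` in `R`, for `S` a left ideal of `A`. -/
def cornerIdeal {A R : Type*} [Ring A] [Ring R] (ψ : R →+ A) (e : A)
    (he : e * e = e) (hmul : ∀ r s : R, ψ (r * s) = ψ r * ψ s)
    (hrange : ∀ r : R, e * ψ r * e = ψ r) (S : Submodule A A) : Submodule R R where
  carrier := {r : R | ∃ x ∈ S, ψ r = e * x * e}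
  add_mem' := by
    rintro a b ⟨x, hx, hax⟩ ⟨y, hy, hby⟩
    exact ⟨x + y, S.add_mem hx hy, by rw [map_add, hax, hby, mul_add, add_mul]⟩
  zero_mem' := ⟨0, S.zero_mem, by simp⟩
  smul_mem' := by
    rintro c r ⟨x, hx, hx'⟩
    have hee : ∀ y : A, e * (e * y) = e * y := fun y => by rw [← mul_assoc, he]
    refine ⟨ψ c * e * x, S.smul_mem _ hx, ?_⟩
    rw [smul_eq_mul, hmul, hx']
    conv_lhs => rw [← hrange c]
    simp only [mul_assoc, hee]

theorem isSemisimpleRing_of_corner_hom {A R : Type*} [Ring A] [Ring R]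
    (hA : IsSemisimpleRing A) (ψ : R →+ A) (e : A) (he : e * e = e)
    (hmul : ∀ r s : R, ψ (r * s) = ψ r * ψ s) (hone : ψ 1 = e)
    (hinj : Function.Injective ψ)
    (hsurj : ∀ x : A, ∃ r : R, ψ r = e * x * e) : IsSemisimpleRing R := by
  haveI := hA
  have hee : ∀ y : A, e * (e * y) = e * y := fun y => by rw [← mul_assoc, he]
  have hrange : ∀ r : R, e * ψ r * e = ψ r := by
    intro r
    calc e * ψ r * e = ψ 1 * ψ r * ψ 1 := by rw [hone]
    _ = ψ (1 * r * 1) := by rw [hmul (1 * r) 1, hmul 1 r]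
    _ = ψ r := by rw [one_mul, mul_one]
  set τ : Submodule A A → Submodule R R := cornerIdeal ψ e he hmul hrange with hτdef
  set 𝒮 : Set (Submodule R R) := {m | IsSimpleModule R m} with h𝒮
  have key : ∀ S : Submodule A A, IsSimpleModule A S → τ S ≤ sSup 𝒮 := by
    intro S hS
    rcases eq_or_ne (τ S) ⊥ with h | h
    · simp [h]
    · refine le_sSup ?_
      rw [h𝒮, Set.mem_setOf_eq, isSimpleModule_iff_isAtom]
      refine ⟨h, fun N hN => ?_⟩
      by_contra hN0
      obtain ⟨b, hbN, hb0⟩ := (Submodule.ne_bot_iff _).mp hN0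
      obtain ⟨x₀, hx₀S, hbx⟩ := hN.le hbN
      have hyS : e * x₀ ∈ S := S.smul_mem e hx₀S
      have hy0 : e * x₀ ≠ 0 := by
        intro h0
        apply hb0
        apply hinj
        rw [hbx, map_zero, h0, zero_mul]
      have hsp : ∀ z ∈ S, ∃ a : A, z = a * (e * x₀) := by
        intro z hz
        have hy0' : (⟨e * x₀, hyS⟩ : ↥S) ≠ 0 := by
          simpa [Subtype.ext_iff] using hy0
        have htop := IsSimpleModule.span_singleton_eq_top A (M := ↥S) hy0'
        have hz' : (⟨z, hz⟩ : ↥S) ∈ Submodule.span A {(⟨e * x₀, hyS⟩ : ↥S)} := by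
          rw [htop]; trivial
        obtain ⟨a, ha⟩ := Submodule.mem_span_singleton.mp hz'
        refine ⟨a, ?_⟩
        have := congrArg (Subtype.val) ha
        simpa using this.symm
      have hle : τ S ≤ N := by
        rintro c ⟨x, hxS, hcx⟩
        obtain ⟨a, ha⟩ := hsp x hxS
        obtain ⟨dA, hdA⟩ := hsurj a
        have hc : c = dA * b := by
          apply hinj
          rw [hmul, hcx, hdA, hbx, ha]
          simp only [mul_assoc, hee]
        rw [hc]
        exact N.smul_mem dA hbN
      exact hN.2 hle
  apply IsSemisimpleModule.of_sSup_simples_eq_top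
  rw [eq_top_iff]
  intro r _
  have h1 : ψ r ∈ ⨆ S : ↥{m : Submodule A A | IsSimpleModule A ↥m}, (S : Submodule A A) := by
    rw [← sSup_eq_iSup', IsSemisimpleModule.sSup_simples_eq_top A A]
    trivial
  have hind := Submodule.iSup_induction
    (motive := fun x : A => ∀ s : R, ψ s = e * x * e → s ∈ sSup 𝒮) _ h1
    (fun i x hx s hs => key i i.2 ⟨x, hx, hs⟩)
    (fun s hs => by
      have : s = 0 := hinj (by rw [hs]; simp)
      rw [this]; exact zero_mem _)
    (fun x y hx hy s hs => by
      obtain ⟨r₁, hr₁⟩ := hsurj x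
      obtain ⟨r₂, hr₂⟩ := hsurj y
      have : s = r₁ + r₂ := hinj (by rw [map_add, hr₁, hr₂, hs, mul_add, add_mul])
      rw [this]; exact add_mem (hx r₁ hr₁) (hy r₂ hr₂))
  exact hind r (hrange r).symm



section Basic

lemma lift_bs {M : Type*} [AddCommGroup M] [Module K M] {α : Type*} (f : α → M) (a : α) :
    (Finsupp.lift M K α f) (Finsupp.single a 1) = f a := by
  simp [Finsupp.lift_apply, Finsupp.sum_single_index]

lemma Tact_bs (t : Fin d) (μ : Fin d → ↥(IFin n)) :
    Tact K Q q n d t (bs K n d μ) = preT K Q q n d t μ :=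
  lift_bs K _ _

lemma lhom_ext_bs {M : Type*} [AddCommGroup M] [Module K M]
    {f g : TSp K n d →ₗ[K] M} (h : ∀ μ, f (bs K n d μ) = g (bs K n d μ)) : f = g := by
  apply Finsupp.lhom_ext
  intro a b
  have hb : (Finsupp.single a b : TSp K n d) = b • bs K n d a := by
    show (Finsupp.single a b : (Fin d → ↥(IFin n)) →₀ K) = b • (Finsupp.single a 1 : (Fin d → ↥(IFin n)) →₀ K)
    rw [Finsupp.smul_single, smul_eq_mul, mul_one]
  rw [hb]; change f (b • bs K n d a) = g (b • bs K n d a); rw [map_smul, map_smul]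
  exact congrArg (fun z => b • z) (h a)

end Basic

section Transfer

variable (n' : ℕ) (hsub : ∀ i : ℤ, i ∈ IFin n → i ∈ IFin n')

def Jm (μ : Fin d → ↥(IFin n)) : Fin d → ↥(IFin n') :=
  fun s => ⟨(μ s : ℤ), hsub _ (μ s).2⟩

def SmP (ν : Fin d → ↥(IFin n')) : Prop := ∀ s, ((ν s : ℤ)) ∈ IFin n

def iotaMap : TSp K n d →ₗ[K] TSp K n' d :=
  Finsupp.lift (TSp K n' d) K (Fin d → ↥(IFin n))
    (fun μ => bs K n' d (Jm n d n' hsub μ))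

def projMap : TSp K n' d →ₗ[K] TSp K n d :=
  Finsupp.lift (TSp K n d) K (Fin d → ↥(IFin n'))
    (fun ν => if h : SmP n d n' ν then bs K n d (fun s => ⟨(ν s : ℤ), h s⟩) else 0)

lemma iota_bs (μ : Fin d → ↥(IFin n)) :
    iotaMap K n d n' hsub (bs K n d μ) = bs K n' d (Jm n d n' hsub μ) := by
  exact lift_bs K _ _

lemma proj_bs (ν : Fin d → ↥(IFin n')) :
    projMap K n d n' (bs K n' d ν) =
      if h : SmP n d n' ν then bs K n d (fun s => ⟨(ν s : ℤ), h s⟩) else 0 :=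
  lift_bs K _ _

lemma proj_iota (x : TSp K n d) :
    projMap K n d n' (iotaMap K n d n' hsub x) = x := by
  have : (projMap K n d n') ∘ₗ (iotaMap K n d n' hsub) = LinearMap.id := by
    apply lhom_ext_bs
    intro μ
    have hS : SmP n d n' (Jm n d n' hsub μ) := fun s => (μ s).2
    simp only [LinearMap.comp_apply, LinearMap.id_apply, iota_bs, proj_bs, dif_pos hS]
    exact congrArg _ (funext fun s => Subtype.ext rfl)
  exact DFunLike.congr_fun this x

lemma Jm_update (μ : Fin d → ↥(IFin n)) (t : Fin d) :
    Function.update (Jm n d n' hsub μ) t (negI n' (Jm n d n' hsub μ t)) =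
      Jm n d n' hsub (Function.update μ t (negI n (μ t))) := by
  funext s
  rcases eq_or_ne s t with h | h
  · subst h
    simp only [Function.update_self]
    apply Subtype.ext
    simp [Jm, negI]
  · simp [Function.update_of_ne h, Jm]

lemma preT_Jm (t : Fin d) (μ : Fin d → ↥(IFin n)) :
    preT K Q q n' d t (Jm n d n' hsub μ) = iotaMap K n d n' hsub (preT K Q q n d t μ) := by
  have hval : ∀ s : Fin d, ((Jm n d n' hsub μ s : ℤ)) = ((μ s : ℤ)) := fun _ => rfl
  have hswap : ∀ σ : Equiv.Perm (Fin d),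
      (Jm n d n' hsub μ) ∘ σ = Jm n d n' hsub (μ ∘ σ) := fun _ => rfl
  simp only [preT, hval]
  split_ifs with h1 h2 h3 h4 h5
  · rw [iota_bs, Jm_update]
  · rw [map_smul, iota_bs]
  · rw [map_add, map_smul, iota_bs, iota_bs, Jm_update]
  · rw [iota_bs, hswap]
  · rw [map_smul, iota_bs]
  · rw [map_add, map_smul, iota_bs, iota_bs, hswap]

lemma SmP_comp (ν : Fin d → ↥(IFin n')) (σ : Equiv.Perm (Fin d))
    (h : SmP n d n' (ν ∘ σ)) : SmP n d n' ν := by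
  intro s
  have := h (σ.symm s)
  simpa using this

lemma SmP_update (ν : Fin d → ↥(IFin n')) (t : Fin d)
    (h : SmP n d n' (Function.update ν t (negI n' (ν t)))) : SmP n d n' ν := by
  intro s
  rcases eq_or_ne s t with hs | hs
  · subst hs
    have := h s
    rw [Function.update_self] at this
    have h2 := neg_mem_IFin this
    simpa [negI] using h2
  · have := h s
    rwa [Function.update_of_ne hs] at this

lemma proj_preT_zero (t : Fin d) (ν : Fin d → ↥(IFin n')) (h : ¬ SmP n d n' ν) :
    projMap K n d n' (preT K Q q n' d t ν) = 0 := by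
  have hbs0 : ∀ ρ : Fin d → ↥(IFin n'), ¬ SmP n d n' ρ →
      projMap K n d n' (bs K n' d ρ) = 0 := by
    intro ρ hρ
    rw [proj_bs, dif_neg hρ]
  simp only [preT]
  split_ifs with h1 h2 h3 h4 h5
  · exact hbs0 _ (fun hc => h (SmP_update n d n' ν t hc))
  · rw [map_smul, hbs0 _ h, smul_zero]
  · rw [map_add, map_smul, hbs0 _ (fun hc => h (SmP_update n d n' ν t hc)),
      hbs0 _ h, smul_zero, add_zero]
  · exact hbs0 _ (fun hc => h (SmP_comp n d n' ν _ hc))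
  · rw [map_smul, hbs0 _ h, smul_zero]
  · rw [map_add, map_smul, hbs0 _ (fun hc => h (SmP_comp n d n' ν _ hc)),
      hbs0 _ h, smul_zero, add_zero]

lemma Tact_iota (t : Fin d) (x : TSp K n d) :
    Tact K Q q n' d t (iotaMap K n d n' hsub x)
      = iotaMap K n d n' hsub (Tact K Q q n d t x) := by
  have : (Tact K Q q n' d t) ∘ₗ (iotaMap K n d n' hsub)
      = (iotaMap K n d n' hsub) ∘ₗ (Tact K Q q n d t) := by
    apply lhom_ext_bs
    intro μ
    simp only [LinearMap.comp_apply, iota_bs, Tact_bs]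
    exact preT_Jm K Q q n d n' hsub t μ
  exact DFunLike.congr_fun this x

include hsub in
lemma Tact_proj (t : Fin d) (x : TSp K n' d) :
    Tact K Q q n d t (projMap K n d n' x)
      = projMap K n d n' (Tact K Q q n' d t x) := by
  have : (Tact K Q q n d t) ∘ₗ (projMap K n d n')
      = (projMap K n d n') ∘ₗ (Tact K Q q n' d t) := by
    apply lhom_ext_bs
    intro ν
    simp only [LinearMap.comp_apply, Tact_bs]
    by_cases h : SmP n d n' ν
    · set μ : Fin d → ↥(IFin n) := fun s => ⟨(ν s : ℤ), h s⟩ with hμ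
      have hJ : Jm n d n' hsub μ = ν := funext fun s => Subtype.ext rfl
      rw [proj_bs, dif_pos h, Tact_bs, ← hμ, ← hJ, preT_Jm, proj_iota]
    · rw [proj_bs, dif_neg h, map_zero, proj_preT_zero K Q q n d n' t ν h]
  exact DFunLike.congr_fun this x

end Transfer

/-- Let `n' ≥ n` with `n' ≡ n (mod 2)`. If `S^B_{Q,q}(n,d)` is not a
semisimple `K`-algebra, then `S^B_{Q,q}(n',d)` is not a semisimple `K`-algebra. -/
theorem schurB_not_semisimple_of_le (hq : q ≠ 0) (hQ : Q ≠ 0) (hd : 0 < d) (hn : 0 < n)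
    (n' : ℕ) (hle : n ≤ n') (hpar : n' % 2 = n % 2)
    (hss : ¬ IsSemisimpleRing ↥(SchurB K Q q n d)) :
    ¬ IsSemisimpleRing ↥(SchurB K Q q n' d) := by
  intro hssA
  apply hss
  have hsub : ∀ i : ℤ, i ∈ IFin n → i ∈ IFin n' := by
    intro i hi
    simp only [IFin, Finset.mem_filter, Finset.mem_Icc] at hi ⊢
    have h2 : n / 2 ≤ n' / 2 := Nat.div_le_div_right hle
    have h2' : ((n / 2 : ℕ) : ℤ) ≤ ((n' / 2 : ℕ) : ℤ) := Int.ofNat_le.mpr h2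
    obtain ⟨⟨ha, hb⟩, hc⟩ := hi
    refine ⟨⟨by omega, by omega⟩, ?_⟩
    rcases hc with hc | hc
    · exact Or.inl hc
    · exact Or.inr (by omega)
  set ι := iotaMap K n d n' hsub with hι
  set p := projMap K n d n' with hp
  have hpi : ∀ x, p (ι x) = x := fun x => proj_iota K n d n' hsub x
  have hTι : ∀ (t : Fin d) (v : TSp K n d),
      Tact K Q q n' d t (ι v) = ι (Tact K Q q n d t v) :=
    fun t v => Tact_iota K Q q n d n' hsub t v
  have hTp : ∀ (t : Fin d) (v : TSp K n' d),
      Tact K Q q n d t (p v) = p (Tact K Q q n' d t v) :=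
    fun t v => Tact_proj K Q q n d n' hsub t v
  -- membership lemmas
  have memB : ∀ f : Module.End K (TSp K n' d),
      (∀ t : Fin d, ∀ v, Tact K Q q n' d t (f v) = f (Tact K Q q n' d t v)) →
      f ∈ SchurB K Q q n' d := by
    intro f hf
    rw [SchurB, Subalgebra.mem_centralizer_iff]
    rintro g ⟨t, rfl⟩
    exact LinearMap.ext fun v => hf t v
  have memBn : ∀ f : Module.End K (TSp K n d),
      (∀ t : Fin d, ∀ v, Tact K Q q n d t (f v) = f (Tact K Q q n d t v)) →
      f ∈ SchurB K Q q n d := by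
    intro f hf
    rw [SchurB, Subalgebra.mem_centralizer_iff]
    rintro g ⟨t, rfl⟩
    exact LinearMap.ext fun v => hf t v
  have commB : ∀ f : Module.End K (TSp K n' d), f ∈ SchurB K Q q n' d →
      ∀ t : Fin d, ∀ v, Tact K Q q n' d t (f v) = f (Tact K Q q n' d t v) := by
    intro f hf t v
    rw [SchurB, Subalgebra.mem_centralizer_iff] at hf
    have := hf (Tact K Q q n' d t) ⟨t, rfl⟩
    exact DFunLike.congr_fun this v
  have commBn : ∀ f : Module.End K (TSp K n d), f ∈ SchurB K Q q n d →
      ∀ t : Fin d, ∀ v, Tact K Q q n d t (f v) = f (Tact K Q q n d t v) := by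
    intro f hf t v
    rw [SchurB, Subalgebra.mem_centralizer_iff] at hf
    have := hf (Tact K Q q n d t) ⟨t, rfl⟩
    exact DFunLike.congr_fun this v
  -- the corner embedding
  have hψmem : ∀ g : ↥(SchurB K Q q n d),
      ι ∘ₗ (g : Module.End K (TSp K n d)) ∘ₗ p ∈ SchurB K Q q n' d := by
    intro g
    apply memB
    intro t v
    simp only [LinearMap.comp_apply]
    rw [hTι t (((g : Module.End K (TSp K n d))) (p v)), commBn _ g.2 t, hTp t v]
  let ψ : ↥(SchurB K Q q n d) →+ ↥(SchurB K Q q n' d) :=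
    AddMonoidHom.mk' (fun g => ⟨ι ∘ₗ (g : Module.End K (TSp K n d)) ∘ₗ p, hψmem g⟩)
      (by
        intro a b
        apply Subtype.ext
        apply LinearMap.ext
        intro v
        simp [LinearMap.add_apply])
  have hψval : ∀ (g : ↥(SchurB K Q q n d)) (v : TSp K n' d),
      ((ψ g : Module.End K (TSp K n' d))) v = ι ((g : Module.End K (TSp K n d)) (p v)) :=
    fun g v => rfl
  have hmul : ∀ a b : ↥(SchurB K Q q n d), ψ (a * b) = ψ a * ψ b := by
    intro a b
    apply Subtype.ext
    apply LinearMap.ext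
    intro v
    have : ((ψ a * ψ b : ↥(SchurB K Q q n' d)) : Module.End K (TSp K n' d)) v
        = (ψ a : Module.End K (TSp K n' d)) ((ψ b : Module.End K (TSp K n' d)) v) := rfl
    rw [this, hψval, hψval, hψval, hpi]
    rfl
  have hinj : Function.Injective ψ := by
    intro a b hab
    apply Subtype.ext
    apply LinearMap.ext
    intro v
    have h1 : ι ((a : Module.End K (TSp K n d)) (p (ι v)))
        = ι ((b : Module.End K (TSp K n d)) (p (ι v))) := by
      have h0 := congrArg
        (fun g : ↥(SchurB K Q q n' d) => (g : Module.End K (TSp K n' d)) (ι v)) hab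
      simpa only [hψval] using h0
    rw [hpi] at h1
    have h2 := congrArg p h1
    rw [hpi, hpi] at h2
    exact h2
  have he : ψ 1 * ψ 1 = ψ 1 := by rw [← hmul, one_mul]
  have hsurj : ∀ x : ↥(SchurB K Q q n' d), ∃ r : ↥(SchurB K Q q n d),
      ψ r = ψ 1 * x * ψ 1 := by
    intro x
    have hrmem : p ∘ₗ (x : Module.End K (TSp K n' d)) ∘ₗ ι ∈ SchurB K Q q n d := by
      apply memBn
      intro t v
      simp only [LinearMap.comp_apply]
      rw [hTp t (((x : Module.End K (TSp K n' d))) (ι v)), commB _ x.2 t, hTι t v]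
    refine ⟨⟨p ∘ₗ (x : Module.End K (TSp K n' d)) ∘ₗ ι, hrmem⟩, ?_⟩
    apply Subtype.ext
    apply LinearMap.ext
    intro v
    have hval : ((ψ 1 * x * ψ 1 : ↥(SchurB K Q q n' d)) : Module.End K (TSp K n' d)) v
        = (ψ 1 : Module.End K (TSp K n' d))
            ((x : Module.End K (TSp K n' d)) ((ψ 1 : Module.End K (TSp K n' d)) v)) := rfl
    rw [hval, hψval, hψval, hψval]
    rfl
  exact isSemisimpleRing_of_corner_hom hssA ψ (ψ 1) he hmul rfl hinj hsurj


end
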